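/- Let m ≥ 3 be an integer and fix reals c > 0, λ > 0. Define, for t ≥ 0, μ(t) = (8c⁴ / (m²(m+2)λ⁴)) · { m·[ e^{−λt}(λ²t² + 3λt + 3) + λ²t²/2 − 3 ] + (λ²t² + 12)(1 − e^{−λt}) − 6λt(1 + e^{−λt}) }. Then μ is strictly increasing on (0, ∞). -/

import Mathlib

/-- The explicit formula for the 2-marginal second moment function `μ_{(2,2,0,…,0)}(t)` of the
`m`-dimensional symmetric Markov random flight with speed `c` and switching intensity `λ`. -/
noncomputable def momentFormula (m : ℕ) (c lam t : ℝ) : ℝ :=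
  8 * c ^ 4 / ((m : ℝ) ^ 2 * ((m : ℝ) + 2) * lam ^ 4) *
    ((m : ℝ) * (Real.exp (-(lam * t)) * (lam ^ 2 * t ^ 2 + 3 * lam * t + 3)
        + lam ^ 2 * t ^ 2 / 2 - 3)
      + (lam ^ 2 * t ^ 2 + 12) * (1 - Real.exp (-(lam * t)))
      - 6 * lam * t * (1 + Real.exp (-(lam * t))))

/-- Cubic Taylor lower bound for the exponential. -/
lemma cubic_le_exp {s : ℝ} (hs : 0 ≤ s) : 1 + s + s^2/2 + s^3/6 ≤ Real.exp s := by
  have h := Real.sum_le_exp_of_nonneg hs 4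
  simp [Finset.sum_range_succ] at h
  norm_num [Nat.factorial] at h
  linarith

/-- Quadratic upper bound for `exp (-s)` on `s ≥ 0`. -/
lemma exp_neg_le_quad {s : ℝ} (hs : 0 ≤ s) : Real.exp (-s) ≤ 1 - s + s^2/2 := by
  have h := cubic_le_exp hs
  have h2 : Real.exp (-s) * Real.exp s = 1 := by rw [← Real.exp_add]; simp
  have hp : (0:ℝ) < 1 + s + s^2/2 + s^3/6 := by positivity
  have hup : Real.exp (-s) * (1 + s + s^2/2 + s^3/6) ≤ 1 := by
    nlinarith [mul_le_mul_of_nonneg_left h (Real.exp_pos (-s)).le]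
  have hqp : (1:ℝ) ≤ (1 - s + s^2/2) * (1 + s + s^2/2 + s^3/6) := by
    nlinarith [sq_nonneg s, pow_nonneg hs 3, pow_nonneg hs 4, pow_nonneg hs 5]
  nlinarith [hup, hqp, hp]

/-- Comparison of function values from a nonnegative derivative. -/
lemma mono_from_deriv {f f' : ℝ → ℝ} (hd : ∀ x, HasDerivAt f (f' x) x)
    (h' : ∀ x, 0 ≤ x → 0 ≤ f' x) {s : ℝ} (hs : 0 ≤ s) : f 0 ≤ f s := by
  have hmono : MonotoneOn f (Set.Ici 0) := by
    apply monotoneOn_of_deriv_nonneg (convex_Ici 0)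
    · exact fun x _ => (hd x).continuousAt.continuousWithinAt
    · intro x hx
      exact (hd x).differentiableAt.differentiableWithinAt
    · intro x hx
      rw [interior_Ici] at hx
      rw [(hd x).deriv]
      exact h' x (le_of_lt hx)
  exact hmono Set.self_mem_Ici hs hs

/-- Cubic Taylor lower bound for `exp (-s)` on `s ≥ 0`. -/
lemma cubic_le_exp_neg {s : ℝ} (hs : 0 ≤ s) : 1 - s + s^2/2 - s^3/6 ≤ Real.exp (-s) := by
  have hd : ∀ x : ℝ, HasDerivAt (fun x : ℝ => Real.exp (-x) - (1 - x + x^2/2 - x^3/6))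
      (-Real.exp (-x) - (-1 + x - x^2/2)) x := by
    intro x
    have h1 : HasDerivAt (fun x : ℝ => Real.exp (-x)) (-Real.exp (-x)) x := by
      simpa using ((hasDerivAt_id x).neg).exp
    have h2 : HasDerivAt (fun x : ℝ => 1 - x + x^2/2 - x^3/6) (-1 + x - x^2/2) x := by
      have ha : HasDerivAt (fun x : ℝ => x^2) (2*x) x := by simpa using hasDerivAt_pow 2 x
      have hb : HasDerivAt (fun x : ℝ => x^3) (3*x^2) x := by simpa using hasDerivAt_pow 3 x
      have := (((hasDerivAt_id x).const_sub 1).add (ha.div_const 2)).sub (hb.div_const 6)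
      exact this.congr_deriv (by ring)
    exact h1.sub h2
  have h' : ∀ x : ℝ, 0 ≤ x → 0 ≤ -Real.exp (-x) - (-1 + x - x^2/2) := by
    intro x hx
    have := exp_neg_le_quad hx
    linarith
  have := mono_from_deriv hd h' hs
  simp at this
  linarith

/-- Positivity of the bracketed factor in the derivative of `momentFormula`. -/
lemma key_pos (M s : ℝ) (hM : 3 ≤ M) (hs : 0 < s) :
    0 < M*s*(1-(1+s)*Real.exp (-s)) + 2*s - 6 + (s^2+4*s+6)*Real.exp (-s) := by
  set u := Real.exp (-s) with hu
  have hu0 : 0 < u := Real.exp_pos _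
  have h2 : u * Real.exp s = 1 := by rw [hu, ← Real.exp_add]; simp
  have h1 : (1+s)*u < 1 := by
    have hlt : s + 1 < Real.exp s := Real.add_one_lt_exp hs.ne'
    nlinarith [mul_lt_mul_of_pos_left hlt hu0]
  have hA : 0 ≤ (M-3)*(s*(1-(1+s)*u)) :=
    mul_nonneg (by linarith) (mul_nonneg hs.le (by linarith))
  have key2 : 0 < 5*s - 6 + (6+s-2*s^2)*u := by
    rcases le_or_gt s 2 with hcase | hcase
    · have hc : 0 ≤ 6+s-2*s^2 := by nlinarith
      have h3 : 1 - s + s^2/2 - s^3/6 ≤ u := cubic_le_exp_neg hs.le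
      nlinarith [mul_le_mul_of_nonneg_left h3 hc, pow_pos hs 3,
        mul_nonneg (pow_pos hs 3).le (sq_nonneg (s - 7/4))]
    · have hc : 0 < 2*s^2 - s - 6 := by nlinarith
      have hp : (0:ℝ) < 1 + s + s^2/2 + s^3/6 := by positivity
      have h5 : 1 + s + s^2/2 + s^3/6 ≤ Real.exp s := cubic_le_exp hs.le
      have hup : u * (1 + s + s^2/2 + s^3/6) ≤ 1 := by
        nlinarith [mul_le_mul_of_nonneg_left h5 hu0.le]
      have h6 : (2*s^2-s-6) * u * (1 + s + s^2/2 + s^3/6) ≤ (2*s^2-s-6) := by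
        nlinarith [mul_le_mul_of_nonneg_left hup hc.le]
      have h7 : (2*s^2-s-6) < (5*s-6) * (1 + s + s^2/2 + s^3/6) := by nlinarith
      have h8 : (2*s^2-s-6) * u < 5*s-6 := by
        have := h6.trans_lt h7
        exact lt_of_mul_lt_mul_right (by linarith [this]) hp.le
      linarith [h8]
  nlinarith [hA, key2]

/-- The derivative of `momentFormula` in closed form. -/
lemma momentFormula_hasDerivAt (m : ℕ) (c lam t : ℝ) :
    HasDerivAt (fun t => momentFormula m c lam t)
      (8 * c ^ 4 / ((m : ℝ) ^ 2 * ((m : ℝ) + 2) * lam ^ 4) * lam *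
        ((m : ℝ) * (lam*t) * (1 - (1 + lam*t) * Real.exp (-(lam*t)))
          + 2*(lam*t) - 6 + ((lam*t)^2 + 4*(lam*t) + 6) * Real.exp (-(lam*t)))) t := by
  have hE : HasDerivAt (fun x : ℝ => Real.exp (-(lam * x))) (-lam * Real.exp (-(lam * t))) t := by
    have h1 : HasDerivAt (fun x : ℝ => -(lam * x)) (-lam) t := by
      exact ((hasDerivAt_id t).const_mul lam).neg.congr_deriv (by ring)
    simpa [mul_comm] using h1.exp
  have ht2 : HasDerivAt (fun x : ℝ => x ^ 2) (2 * t) t := by simpa using hasDerivAt_pow 2 t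
  have hid : HasDerivAt (fun x : ℝ => x) 1 t := hasDerivAt_id t
  have hP : HasDerivAt (fun x : ℝ => lam ^ 2 * x ^ 2 + 3 * lam * x + 3)
      (lam ^ 2 * (2 * t) + 3 * lam * 1) t :=
    ((ht2.const_mul (lam ^ 2)).add (hid.const_mul (3 * lam))).add_const 3
  have hm1 : HasDerivAt (fun x : ℝ =>
      Real.exp (-(lam * x)) * (lam ^ 2 * x ^ 2 + 3 * lam * x + 3)
        + lam ^ 2 * x ^ 2 / 2 - 3)
      ((-lam * Real.exp (-(lam * t))) * (lam ^ 2 * t ^ 2 + 3 * lam * t + 3)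
        + Real.exp (-(lam * t)) * (lam ^ 2 * (2 * t) + 3 * lam * 1)
        + lam ^ 2 * (2 * t) / 2) t :=
    ((hE.mul hP).add ((ht2.const_mul (lam ^ 2)).div_const 2)).sub_const 3
  have hQ : HasDerivAt (fun x : ℝ => (lam ^ 2 * x ^ 2 + 12) * (1 - Real.exp (-(lam * x))))
      ((lam ^ 2 * (2 * t)) * (1 - Real.exp (-(lam * t)))
        + (lam ^ 2 * t ^ 2 + 12) * (-(-lam * Real.exp (-(lam * t))))) t :=
    ((ht2.const_mul (lam ^ 2)).add_const 12).mul (hE.const_sub 1)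
  have hR : HasDerivAt (fun x : ℝ => 6 * lam * x * (1 + Real.exp (-(lam * x))))
      ((6 * lam * 1) * (1 + Real.exp (-(lam * t)))
        + (6 * lam * t) * (-lam * Real.exp (-(lam * t)))) t :=
    (hid.const_mul (6 * lam)).mul (hE.const_add 1)
  have htotal := (((hm1.const_mul (m : ℝ)).add hQ).sub hR).const_mul
    (8 * c ^ 4 / ((m : ℝ) ^ 2 * ((m : ℝ) + 2) * lam ^ 4))
  unfold momentFormula
  exact htotal.congr_deriv (by ring)

/-- The 2-marginal second moment function `μ` is strictly increasing on `(0, ∞)`. -/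
theorem moment_strictMono (m : ℕ) (hm : 3 ≤ m) (c lam : ℝ) (hc : 0 < c) (hlam : 0 < lam) :
    StrictMonoOn (fun t => momentFormula m c lam t) (Set.Ioi (0 : ℝ)) := by
  have hm3 : (3:ℝ) ≤ (m:ℝ) := by exact_mod_cast hm
  have hA : 0 < 8 * c ^ 4 / ((m : ℝ) ^ 2 * ((m : ℝ) + 2) * lam ^ 4) := by
    have hm0 : (0:ℝ) < m := by linarith
    positivity
  apply StrictMonoOn.mono (s := Set.Ici (0:ℝ)) ?_ (Set.Ioi_subset_Ici le_rfl)
  apply strictMonoOn_of_deriv_pos (convex_Ici 0)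
  · exact fun x _ => (momentFormula_hasDerivAt m c lam x).continuousAt.continuousWithinAt
  · intro t ht
    rw [interior_Ici] at ht
    rw [(momentFormula_hasDerivAt m c lam t).deriv]
    have hs : 0 < lam * t := mul_pos hlam ht
    have hk := key_pos (m:ℝ) (lam * t) hm3 hs
    rw [show -(lam*t) = -(lam*t) from rfl] at hk
    have : 0 < (m : ℝ) * (lam*t) * (1 - (1 + lam*t) * Real.exp (-(lam*t)))
          + 2*(lam*t) - 6 + ((lam*t)^2 + 4*(lam*t) + 6) * Real.exp (-(lam*t)) := by
      have := hk
      linarith [hk]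
    positivity
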